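/- Explicit solution of the nilpotent differential-algebraic equation (Proposition 1, formula (9)): Let N ∈ ℂ^{d×d} be nilpotent with N^κ = 0, let I ⊆ ℝ be an open interval, let f : I → ℂ^d be κ-times differentiable, and let ξ : I → ℂ^d be κ-times differentiable with N ξ'(t) = ξ(t) + f(t) for all t ∈ I. Then ξ(t) = −∑_{i=0}^{κ−1} N^i f^{(i)}(t) for all t ∈ I, where f^{(i)} denotes the i-th derivative of f. -/

import Mathlib

/-- **explicit solution of the nilpotent DAE, Proposition 1, eq. (9).**
Let `N` be nilpotent with `N^κ = 0`, let `I` be an open interval, let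
`f, ξ : I → ℂ^d` be `κ`-times differentiable with `N ξ'(t) = ξ(t) + f(t)` on `I`.
Then `ξ(t) = -∑_{i=0}^{κ-1} N^i f^{(i)}(t)` for all `t ∈ I`. -/
theorem nilpotent_dae_explicit_solution
    {d : ℕ} (N : Matrix (Fin d) (Fin d) ℂ) (κ : ℕ) (hN : N ^ κ = 0)
    (I : Set ℝ) (hIopen : IsOpen I) (hIinterval : I.OrdConnected)
    (f ξ : ℝ → (Fin d → ℂ))
    (hf : ∀ i < κ, DifferentiableOn ℝ (iteratedDeriv i f) I)
    (hξ : ∀ i < κ, DifferentiableOn ℝ (iteratedDeriv i ξ) I)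
    (hdae : ∀ t ∈ I, N.mulVec (deriv ξ t) = ξ t + f t) :
    ∀ t ∈ I, ξ t = -∑ i ∈ Finset.range κ, (N ^ i).mulVec (iteratedDeriv i f t) := by
  classical
  set L : (Fin d → ℂ) →L[ℝ] (Fin d → ℂ) :=
    LinearMap.toContinuousLinearMap ((N.mulVecLin).restrictScalars ℝ) with hLdef
  have hL : ∀ v, L v = N.mulVec v := fun v => rfl
  have claimA : ∀ j, j < κ → ∀ t ∈ I,
      N.mulVec (iteratedDeriv (j+1) ξ t) = iteratedDeriv j ξ t + iteratedDeriv j f t := by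
    intro j
    induction j with
    | zero =>
      intro _ t ht
      simpa [iteratedDeriv_succ, iteratedDeriv_zero] using hdae t ht
    | succ j ih =>
      intro hj t ht
      have hj' : j < κ := Nat.lt_of_succ_lt hj
      have hmem : I ∈ nhds t := hIopen.mem_nhds ht
      have hev : (fun s => N.mulVec (iteratedDeriv (j+1) ξ s))
          =ᶠ[nhds t] (fun s => iteratedDeriv j ξ s + iteratedDeriv j f s) :=
        Filter.eventuallyEq_of_mem hmem (fun s hs => ih hj' s hs)
      have hd := hev.deriv_eq
      have hξd : DifferentiableAt ℝ (iteratedDeriv (j+1) ξ) t :=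
        (hξ (j+1) hj).differentiableAt hmem
      have hLd : deriv (fun s => N.mulVec (iteratedDeriv (j+1) ξ s)) t
          = N.mulVec (iteratedDeriv (j+2) ξ t) := by
        have h2 : HasDerivAt (fun s => L (iteratedDeriv (j+1) ξ s))
            (L (deriv (iteratedDeriv (j+1) ξ) t)) t :=
          L.hasFDerivAt.comp_hasDerivAt t hξd.hasDerivAt
        have := h2.deriv
        simpa [hL, iteratedDeriv_succ] using this
      have hRd : deriv (fun s => iteratedDeriv j ξ s + iteratedDeriv j f s) t
          = iteratedDeriv (j+1) ξ t + iteratedDeriv (j+1) f t := by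
        have h1 : DifferentiableAt ℝ (iteratedDeriv j ξ) t :=
          (hξ j hj').differentiableAt hmem
        have h2 : DifferentiableAt ℝ (iteratedDeriv j f) t :=
          (hf j hj').differentiableAt hmem
        rw [deriv_fun_add h1 h2]
        simp [iteratedDeriv_succ]
      rw [hLd, hRd] at hd
      simpa using hd
  have claimB : ∀ j, j ≤ κ → ∀ t ∈ I,
      ξ t = (N ^ j).mulVec (iteratedDeriv j ξ t)
        - ∑ i ∈ Finset.range j, (N ^ i).mulVec (iteratedDeriv i f t) := by
    intro j
    induction j with
    | zero => intro _ t ht; simp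
    | succ j ih =>
      intro hj t ht
      have hj' : j < κ := hj
      have h1 := ih (Nat.le_of_lt hj') t ht
      have h2 : (N ^ j).mulVec (iteratedDeriv j ξ t)
          = (N ^ (j+1)).mulVec (iteratedDeriv (j+1) ξ t)
            - (N ^ j).mulVec (iteratedDeriv j f t) := by
        have := claimA j hj' t ht
        have h3 : (N ^ j).mulVec (N.mulVec (iteratedDeriv (j+1) ξ t))
            = (N ^ j).mulVec (iteratedDeriv j ξ t + iteratedDeriv j f t) := by rw [this]
        rw [Matrix.mulVec_mulVec, ← pow_succ, Matrix.mulVec_add] at h3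
        rw [h3]; abel
      rw [h1, h2, Finset.sum_range_succ]
      abel
  intro t ht
  have := claimB κ le_rfl t ht
  rw [hN] at this
  simpa using this
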